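/- Let R ∈ C¹([0,∞)) satisfy condition (Rcond). Then for each fixed b₁ > 0 and b₂ > 0 there exist C ≥ 1 and s₁ > 0 such that for all s ≥ s₁: C⁻¹ R(s) ≤ R(b₁ s) ≤ C R(s) and C⁻¹ R(s) ≤ R(s^{b₂}) ≤ C R(s). -/

import Mathlib

noncomputable section

/-- Condition (Rcond): `R ∈ C¹([0,∞))`, `R(t) > 0` and `R'(t) ≥ 0` for `t > 0`,
`R(t) → ∞` as `t → ∞`, and there are `C̄ > 0`, `t̲ > e` with
`R'(t)/R(t) ≤ C̄/(t log t)` for all `t ≥ t̲`. -/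
structure RCond (R : ℝ → ℝ) : Prop where
  contDiffOn : ContDiffOn ℝ 1 R (Set.Ici 0)
  pos : ∀ t > (0:ℝ), 0 < R t
  deriv_nonneg : ∀ t > (0:ℝ), 0 ≤ deriv R t
  tendsto_atTop : Filter.Tendsto R Filter.atTop Filter.atTop
  ratio : ∃ Cbar > (0:ℝ), ∃ tlow > Real.exp 1,
    ∀ t ≥ tlow, deriv R t / R t ≤ Cbar / (t * Real.log t)

lemma RCond.diffAt {R : ℝ → ℝ} (hR : RCond R) {t : ℝ} (ht : 0 < t) :
    DifferentiableAt ℝ R t :=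
  ((hR.contDiffOn.differentiableOn one_ne_zero) t (le_of_lt ht)).differentiableAt
    (Ici_mem_nhds ht)

lemma RCond.mono {R : ℝ → ℝ} (hR : RCond R) {a b : ℝ} (ha : 0 < a) (hab : a ≤ b) :
    R a ≤ R b := by
  have hmono : MonotoneOn R (Set.Ici a) := by
    apply monotoneOn_of_deriv_nonneg (convex_Ici a)
    · intro t ht
      exact (hR.diffAt (lt_of_lt_of_le ha ht)).continuousAt.continuousWithinAt
    · intro t ht
      rw [interior_Ici] at ht
      exact (hR.diffAt (ha.trans ht)).differentiableWithinAt
    · intro t ht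
      rw [interior_Ici] at ht
      exact hR.deriv_nonneg t (ha.trans ht)
  exact hmono (Set.self_mem_Ici) hab hab

/-- Key integral estimate: the increment of `log R` is controlled by the increment of
`log log`. -/
lemma RCond.key {R : ℝ → ℝ} (hR : RCond R) {Cbar tlow : ℝ} (hC : 0 < Cbar)
    (htl : Real.exp 1 < tlow)
    (hratio : ∀ t ≥ tlow, deriv R t / R t ≤ Cbar / (t * Real.log t))
    {a b : ℝ} (ha : tlow ≤ a) (hab : a ≤ b) :
    Real.log (R b) - Real.log (R a)
      ≤ Cbar * (Real.log (Real.log b) - Real.log (Real.log a)) := by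
  set g : ℝ → ℝ := fun t => Cbar * Real.log (Real.log t) - Real.log (R t) with hg
  have hder : ∀ t ∈ Set.Ici tlow,
      HasDerivAt g (Cbar * (t⁻¹ / Real.log t) - deriv R t / R t) t := by
    intro t ht
    have ht' : tlow ≤ t := ht
    have ht0 : 0 < t := lt_trans (Real.exp_pos 1) (lt_of_lt_of_le htl ht')
    have hlogt : 1 < Real.log t := by
      rw [show (1:ℝ) = Real.log (Real.exp 1) by rw [Real.log_exp]]
      exact Real.log_lt_log (Real.exp_pos 1) (lt_of_lt_of_le htl ht')
    have hRt : 0 < R t := hR.pos t ht0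
    have h1 : HasDerivAt (fun t => Real.log (R t)) (deriv R t / R t) t :=
      ((hR.diffAt ht0).hasDerivAt).log hRt.ne'
    have h2 : HasDerivAt Real.log t⁻¹ t := Real.hasDerivAt_log ht0.ne'
    have h3 : HasDerivAt (fun t => Real.log (Real.log t)) (t⁻¹ / Real.log t) t := by
      have := h2.log (by positivity : Real.log t ≠ 0)
      simpa using this
    exact (h3.const_mul Cbar).sub h1
  have hmono : MonotoneOn g (Set.Ici tlow) := by
    apply monotoneOn_of_deriv_nonneg (convex_Ici tlow)
    · intro t ht; exact (hder t ht).continuousAt.continuousWithinAt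
    · intro t ht
      rw [interior_Ici] at ht
      exact (hder t (Set.mem_Ici.2 (le_of_lt (Set.mem_Ioi.1 ht)))).differentiableAt.differentiableWithinAt
    · intro t ht
      rw [interior_Ici] at ht
      have ht' : tlow ≤ t := le_of_lt ht
      have ht0 : 0 < t := lt_trans (Real.exp_pos 1) (lt_of_lt_of_le htl ht')
      have hlogt : 1 < Real.log t := by
        rw [show (1:ℝ) = Real.log (Real.exp 1) by rw [Real.log_exp]]
        exact Real.log_lt_log (Real.exp_pos 1) (lt_of_lt_of_le htl ht')
      rw [(hder t ht').deriv]
      have hrat := hratio t ht'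
      have heq : Cbar * (t⁻¹ / Real.log t) = Cbar / (t * Real.log t) := by
        field_simp
      rw [heq]
      linarith
  have := hmono (by exact ha : a ∈ Set.Ici tlow) (ha.trans hab) hab
  simp only [hg] at this
  linarith

/-- Exponentiated form of the key estimate. -/
lemma RCond.key' {R : ℝ → ℝ} (hR : RCond R) {Cbar tlow : ℝ} (hC : 0 < Cbar)
    (htl : Real.exp 1 < tlow)
    (hratio : ∀ t ≥ tlow, deriv R t / R t ≤ Cbar / (t * Real.log t))
    {a b K : ℝ} (ha : tlow ≤ a) (hab : a ≤ b)
    (hK : Real.log (Real.log b) - Real.log (Real.log a) ≤ K) :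
    R b ≤ Real.exp (Cbar * K) * R a := by
  have ha0 : 0 < a := lt_trans (Real.exp_pos 1) (lt_of_lt_of_le htl ha)
  have hRa : 0 < R a := hR.pos a ha0
  have hRb : 0 < R b := hR.pos b (ha0.trans_le hab)
  have h := hR.key hC htl hratio ha hab
  have h2 : Real.log (R b) ≤ Cbar * K + Real.log (R a) := by nlinarith
  calc R b = Real.exp (Real.log (R b)) := (Real.exp_log hRb).symm
    _ ≤ Real.exp (Cbar * K + Real.log (R a)) := Real.exp_le_exp.2 h2
    _ = Real.exp (Cbar * K) * R a := by rw [Real.exp_add, Real.exp_log hRa]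

/-- under (Rcond), for fixed `b₁, b₂ > 0` one has two-sided bounds
`C⁻¹ R(s) ≤ R(b₁ s) ≤ C R(s)` and `C⁻¹ R(s) ≤ R(s^{b₂}) ≤ C R(s)` for large `s`. -/
theorem R_slowly_varying (R : ℝ → ℝ) (hR : RCond R)
    (b₁ b₂ : ℝ) (hb₁ : 0 < b₁) (hb₂ : 0 < b₂) :
    ∃ C ≥ (1:ℝ), ∃ s₁ > (0:ℝ), ∀ s ≥ s₁,
      C⁻¹ * R s ≤ R (b₁ * s) ∧ R (b₁ * s) ≤ C * R s ∧
      C⁻¹ * R s ≤ R (s ^ b₂) ∧ R (s ^ b₂) ≤ C * R s := by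
  obtain ⟨Cbar, hC, tlow, htl, hratio⟩ := hR.ratio
  have htl0 : 0 < tlow := lt_trans (Real.exp_pos 1) htl
  have htl1 : 1 < tlow := lt_trans (by simpa using Real.one_lt_exp_iff_of_nonneg le_rfl |>.2 one_pos) htl
  set K : ℝ := Real.log 2 + |Real.log b₂| with hKdef
  have hKpos : 0 < K := by
    have : 0 < Real.log 2 := Real.log_pos (by norm_num)
    have := abs_nonneg (Real.log b₂)
    linarith
  set C : ℝ := Real.exp (Cbar * K) with hCdef
  have hCpos : 0 < C := Real.exp_pos _
  have hC1 : 1 ≤ C := Real.one_le_exp (by positivity)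
  refine ⟨C, hC1, max (max (tlow / b₁) (Real.exp (2 * |Real.log b₁|)))
      (max tlow (tlow ^ (1 / b₂))), ?_, ?_⟩
  · exact lt_of_lt_of_le htl0 (le_max_of_le_right (le_max_left _ _))
  intro s hs
  have hs_tlow : tlow ≤ s := le_trans (le_max_of_le_right (le_max_left _ _)) hs
  have hse : Real.exp 1 < s := lt_of_lt_of_le htl hs_tlow
  have hs0 : 0 < s := lt_trans (Real.exp_pos 1) hse
  have hs1 : 1 < s := lt_of_lt_of_le htl1 hs_tlow
  have hlogs : 1 < Real.log s := by
    rw [show (1:ℝ) = Real.log (Real.exp 1) by rw [Real.log_exp]]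
    exact Real.log_lt_log (Real.exp_pos 1) hse
  have hlogs0 : 0 < Real.log s := lt_trans one_pos hlogs
  -- s ≥ exp (2 |log b₁|)
  have hs_exp : 2 * |Real.log b₁| ≤ Real.log s := by
    have h1 : Real.exp (2 * |Real.log b₁|) ≤ s :=
      le_trans (le_max_of_le_left (le_max_right _ _)) hs
    calc 2 * |Real.log b₁| = Real.log (Real.exp (2 * |Real.log b₁|)) :=
          (Real.log_exp _).symm
      _ ≤ Real.log s := Real.log_le_log (Real.exp_pos _) h1
  -- tlow ≤ b₁ * s
  have hs_b1 : tlow ≤ b₁ * s := by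
    have h1 : tlow / b₁ ≤ s := le_trans (le_max_of_le_left (le_max_left _ _)) hs
    rw [div_le_iff₀ hb₁] at h1
    linarith [mul_comm b₁ s]
  have hb1s0 : 0 < b₁ * s := mul_pos hb₁ hs0
  -- tlow ≤ s ^ b₂
  have hs_pow : tlow ≤ s ^ b₂ := by
    have h1 : tlow ^ (1 / b₂) ≤ s := le_trans (le_max_of_le_right (le_max_right _ _)) hs
    have h2 : (tlow ^ (1 / b₂)) ^ b₂ ≤ s ^ b₂ :=
      Real.rpow_le_rpow (Real.rpow_nonneg htl0.le _) h1 hb₂.le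
    rwa [← Real.rpow_mul htl0.le, one_div_mul_cancel hb₂.ne', Real.rpow_one] at h2
  have hpow0 : 0 < s ^ b₂ := Real.rpow_pos_of_pos hs0 _
  have hRs : 0 < R s := hR.pos s hs0
  have hlog2K : Real.log 2 ≤ K := le_add_of_nonneg_right (abs_nonneg _)
  have habsK : |Real.log b₂| ≤ K := le_add_of_nonneg_left (Real.log_pos (by norm_num)).le
  have hloglogpow : Real.log (Real.log (s ^ b₂)) = Real.log b₂ + Real.log (Real.log s) := by
    rw [Real.log_rpow hs0, Real.log_mul hb₂.ne' hlogs0.ne']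
  have hinv : C⁻¹ ≤ 1 := inv_le_one_of_one_le₀ hC1
  have part12 : C⁻¹ * R s ≤ R (b₁ * s) ∧ R (b₁ * s) ≤ C * R s := by
    rcases le_total b₁ 1 with hb | hb
    · have hle : b₁ * s ≤ s := by nlinarith
      have hdiff : Real.log (Real.log s) - Real.log (Real.log (b₁ * s)) ≤ K := by
        have hhalf : Real.log s / 2 ≤ Real.log (b₁ * s) := by
          rw [Real.log_mul hb₁.ne' hs0.ne']
          have := neg_abs_le (Real.log b₁)
          linarith
        have h0 : 0 < Real.log s / 2 := by linarith
        have h2 := Real.log_le_log h0 hhalf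
        rw [Real.log_div hlogs0.ne' two_ne_zero] at h2
        linarith
      have hk := hR.key' hC htl hratio hs_b1 hle hdiff
      constructor
      · rw [inv_mul_le_iff₀ hCpos]; exact hk
      · exact le_trans (hR.mono hb1s0 hle) (le_mul_of_one_le_left hRs.le hC1)
    · have hle : s ≤ b₁ * s := by nlinarith
      have hdiff : Real.log (Real.log (b₁ * s)) - Real.log (Real.log s) ≤ K := by
        have h2 : Real.log (b₁ * s) ≤ 2 * Real.log s := by
          rw [Real.log_mul hb₁.ne' hs0.ne']
          have := le_abs_self (Real.log b₁)
          linarith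
        have hpos : 0 < Real.log (b₁ * s) := Real.log_pos (lt_of_lt_of_le htl1 hs_b1)
        have h3 := Real.log_le_log hpos h2
        rw [Real.log_mul two_ne_zero hlogs0.ne'] at h3
        linarith
      refine ⟨le_trans (by nlinarith) (hR.mono hs0 hle),
        hR.key' hC htl hratio hs_tlow hle hdiff⟩
  have part34 : C⁻¹ * R s ≤ R (s ^ b₂) ∧ R (s ^ b₂) ≤ C * R s := by
    rcases le_total b₂ 1 with hb | hb
    · have hle : s ^ b₂ ≤ s := by
        have h1 := Real.rpow_le_rpow_of_exponent_le hs1.le hb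
        rwa [Real.rpow_one] at h1
      have hdiff : Real.log (Real.log s) - Real.log (Real.log (s ^ b₂)) ≤ K := by
        rw [hloglogpow]
        have := neg_abs_le (Real.log b₂)
        linarith
      have hk := hR.key' hC htl hratio hs_pow hle hdiff
      constructor
      · rw [inv_mul_le_iff₀ hCpos]; exact hk
      · exact le_trans (hR.mono hpow0 hle) (le_mul_of_one_le_left hRs.le hC1)
    · have hle : s ≤ s ^ b₂ := by
        have h1 := Real.rpow_le_rpow_of_exponent_le hs1.le hb
        rwa [Real.rpow_one] at h1
      have hdiff : Real.log (Real.log (s ^ b₂)) - Real.log (Real.log s) ≤ K := by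
        rw [hloglogpow]
        have := le_abs_self (Real.log b₂)
        linarith
      refine ⟨le_trans (by nlinarith) (hR.mono hs0 hle),
        hR.key' hC htl hratio hs_tlow hle hdiff⟩
  exact ⟨part12.1, part12.2, part34.1, part34.2⟩
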